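/- Let σ ∈ ℝ, let m = ⌈|σ|⌉, and let C_n = sup_{y>0} yⁿ R(y) with R(y) = 2∑_{k=1}^∞ e^{-π k² y²}. Define 𝒲_σ(x) = ∫_{-∞}^{∞} R(e^y) R(e^{x−y}) e^{x + (2σ−1)y} dy. Then for all x ≥ 0, 𝒲_σ(x) ≤ (C₁ + C_{4m+3}) C_{2m+3} e^{−2(m+1)x}. -/

import Mathlib

open Real Set MeasureTheory

noncomputable def Rf (y : ℝ) : ℝ := 2 * ∑' k : ℕ, Real.exp (-π * (k + 1) ^ 2 * y ^ 2)

noncomputable def Wf (σ x : ℝ) : ℝ :=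
  ∫ y : ℝ, Rf (Real.exp y) * Rf (Real.exp (x - y)) * Real.exp (x + (2 * σ - 1) * y)

noncomputable def Cn (n : ℕ) : ℝ := sSup {x : ℝ | ∃ y : ℝ, 0 < y ∧ x = y ^ n * Rf y}

lemma summable_aux {y : ℝ} (hy : 0 < y) :
    Summable (fun k : ℕ => Real.exp (-π * ((k : ℝ) + 1) ^ 2 * y ^ 2)) := by
  have hr0 : (0:ℝ) < Real.exp (-π * y ^ 2) := Real.exp_pos _
  have hr1 : Real.exp (-π * y ^ 2) < 1 := by
    rw [Real.exp_lt_one_iff]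
    have : 0 < π * y ^ 2 := by positivity
    linarith
  have hg : Summable (fun k : ℕ => Real.exp (-π * y ^ 2) * Real.exp (-π * y ^ 2) ^ k) :=
    (summable_geometric_of_lt_one hr0.le hr1).mul_left _
  refine Summable.of_nonneg_of_le (fun k => (Real.exp_pos _).le) ?_ hg
  intro k
  rw [← Real.exp_nat_mul, ← Real.exp_add]
  apply Real.exp_le_exp.2
  have hπ := Real.pi_pos
  have hk : (0:ℝ) ≤ (k:ℝ) := Nat.cast_nonneg k
  nlinarith [sq_nonneg y, sq_nonneg ((k:ℝ)), mul_nonneg (mul_nonneg hπ.le (sq_nonneg y)) hk]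

lemma Rf_nonneg (y : ℝ) : 0 ≤ Rf y := by
  unfold Rf
  have : 0 ≤ ∑' k : ℕ, Real.exp (-π * (k + 1) ^ 2 * y ^ 2) :=
    tsum_nonneg fun k => (Real.exp_pos _).le
  linarith

lemma gauss_sum_le {y : ℝ} (hy : 0 < y) (N : ℕ) :
    ∑ k ∈ Finset.range N, ∫ t in (k : ℝ)..((k : ℝ) + 1), y * Real.exp (-π * t ^ 2 * y ^ 2)
      ≤ 1 / 2 := by
  have hc : Continuous (fun t : ℝ => y * Real.exp (-π * t ^ 2 * y ^ 2)) := by continuity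
  have hfun : (fun t : ℝ => y * Real.exp (-π * t ^ 2 * y ^ 2))
      = fun t : ℝ => y * Real.exp (-(π * y ^ 2) * t ^ 2) := by
    ext t; ring_nf
  have hsum : ∑ k ∈ Finset.range N, (∫ t in ((k:ℕ) : ℝ)..(((k+1:ℕ)) : ℝ), y * Real.exp (-π * t ^ 2 * y ^ 2))
      = ∫ t in ((0:ℕ) : ℝ)..((N : ℕ) : ℝ), y * Real.exp (-π * t ^ 2 * y ^ 2) :=
    intervalIntegral.sum_integral_adjacent_intervals (fun k _ => hc.intervalIntegrable _ _)
  push_cast at hsum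
  rw [hsum]
  have hint : IntegrableOn (fun t : ℝ => y * Real.exp (-π * t ^ 2 * y ^ 2)) (Ioi 0) := by
    rw [hfun]
    exact ((integrable_exp_neg_mul_sq (b := π * y ^ 2) (by positivity)).const_mul y).integrableOn
  have h1 : (∫ t in (0:ℝ)..(N:ℝ), y * Real.exp (-π * t ^ 2 * y ^ 2))
      = ∫ t in Ioc (0:ℝ) (N:ℝ), y * Real.exp (-π * t ^ 2 * y ^ 2) := by
    rw [intervalIntegral.integral_of_le (by positivity)]
  rw [h1]
  have h2 : (∫ t in Ioc (0:ℝ) (N:ℝ), y * Real.exp (-π * t ^ 2 * y ^ 2))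
      ≤ ∫ t in Ioi (0:ℝ), y * Real.exp (-π * t ^ 2 * y ^ 2) := by
    apply setIntegral_mono_set hint
    · filter_upwards with t using by positivity
    · exact HasSubset.Subset.eventuallyLE Ioc_subset_Ioi_self
  refine h2.trans ?_
  have h3 : (∫ t in Ioi (0:ℝ), y * Real.exp (-π * t ^ 2 * y ^ 2))
      = y * ∫ t in Ioi (0:ℝ), Real.exp (-(π * y ^ 2) * t ^ 2) := by
    rw [hfun, MeasureTheory.integral_const_mul]
  rw [h3, integral_gaussian_Ioi]
  have h4 : π / (π * y ^ 2) = (1 / y) ^ 2 := by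
    field_simp
  have hy' : y ≠ 0 := hy.ne'
  rw [h4, Real.sqrt_sq (by positivity), one_div, mul_div_assoc', mul_inv_cancel₀ hy']

lemma term_le_integral {y : ℝ} (hy : 0 < y) (k : ℕ) :
    y * Real.exp (-π * ((k : ℝ) + 1) ^ 2 * y ^ 2)
      ≤ ∫ t in (k : ℝ)..((k : ℝ) + 1), y * Real.exp (-π * t ^ 2 * y ^ 2) := by
  have hc : Continuous (fun t : ℝ => y * Real.exp (-π * t ^ 2 * y ^ 2)) := by continuity
  have h0 : y * Real.exp (-π * ((k : ℝ) + 1) ^ 2 * y ^ 2)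
      = ∫ _ in (k : ℝ)..((k : ℝ) + 1), y * Real.exp (-π * ((k : ℝ) + 1) ^ 2 * y ^ 2) := by
    rw [intervalIntegral.integral_const]
    simp
  rw [h0]
  apply intervalIntegral.integral_mono_on (by linarith)
    (intervalIntegrable_const) (hc.intervalIntegrable _ _)
  intro t ht
  have h1 : (0:ℝ) ≤ t := le_trans (Nat.cast_nonneg k) ht.1
  have h2 : t ≤ (k:ℝ) + 1 := ht.2
  have h3 : t ^ 2 ≤ ((k:ℝ) + 1) ^ 2 := by nlinarith
  have hπ := Real.pi_pos
  apply mul_le_mul_of_nonneg_left _ hy.le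
  apply Real.exp_le_exp.2
  nlinarith [mul_le_mul_of_nonneg_left h3 (by positivity : (0:ℝ) ≤ π * y ^ 2)]

lemma Rf_mul_self_le {y : ℝ} (hy : 0 < y) : y * Rf y ≤ 1 := by
  unfold Rf
  have h1 : y * (2 * ∑' k : ℕ, Real.exp (-π * (k + 1) ^ 2 * y ^ 2))
      = 2 * ∑' k : ℕ, y * Real.exp (-π * ((k:ℝ) + 1) ^ 2 * y ^ 2) := by
    rw [tsum_mul_left]; ring
  rw [h1]
  have h2 : ∑' k : ℕ, y * Real.exp (-π * ((k:ℝ) + 1) ^ 2 * y ^ 2) ≤ 1 / 2 := by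
    apply Real.tsum_le_of_sum_range_le (fun k => by positivity)
    intro N
    calc ∑ k ∈ Finset.range N, y * Real.exp (-π * ((k:ℝ) + 1) ^ 2 * y ^ 2)
        ≤ ∑ k ∈ Finset.range N, ∫ t in (k : ℝ)..((k : ℝ) + 1), y * Real.exp (-π * t ^ 2 * y ^ 2) :=
          Finset.sum_le_sum fun k _ => term_le_integral hy k
      _ ≤ 1 / 2 := gauss_sum_le hy N
  linarith

lemma poly_exp_le (n : ℕ) {u : ℝ} (hu : 0 ≤ u) :
    u ^ n * Real.exp (-(π/2) * u ^ 2) ≤ (n.factorial : ℝ) := by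
  have hn1 : (1:ℝ) ≤ (n.factorial : ℝ) := by
    exact_mod_cast Nat.one_le_iff_ne_zero.2 (Nat.factorial_ne_zero n)
  rcases le_or_gt u 1 with h | h
  · have h1 : u ^ n ≤ 1 := pow_le_one₀ hu h
    have h2 : Real.exp (-(π/2) * u ^ 2) ≤ 1 := by
      apply Real.exp_le_one_iff.2
      nlinarith [Real.pi_pos, sq_nonneg u]
    nlinarith [pow_nonneg hu n, Real.exp_pos (-(π/2) * u ^ 2)]
  · have hpi := Real.pi_gt_three
    have h2 : Real.exp (-(π/2) * u ^ 2) ≤ Real.exp (-u) := by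
      apply Real.exp_le_exp.2
      nlinarith
    have h3 : u ^ n ≤ (n.factorial : ℝ) * Real.exp u := by
      have := Real.pow_div_factorial_le_exp (x := u) hu n
      rw [div_le_iff₀ (by positivity : (0:ℝ) < (n.factorial : ℝ))] at this
      linarith [this]
    calc u ^ n * Real.exp (-(π/2) * u ^ 2) ≤ u ^ n * Real.exp (-u) := by
          apply mul_le_mul_of_nonneg_left h2 (by positivity)
      _ ≤ ((n.factorial : ℝ) * Real.exp u) * Real.exp (-u) := by
          apply mul_le_mul_of_nonneg_right h3 (Real.exp_pos _).le
      _ = (n.factorial : ℝ) := by rw [mul_assoc, ← Real.exp_add]; simp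

lemma Rf_pow_le (n : ℕ) {y : ℝ} (hy : 0 < y) :
    y ^ (n+1) * Rf y ≤ Real.sqrt 2 * (n.factorial : ℝ) := by
  set z := y / Real.sqrt 2 with hzdef
  have h2 : (0:ℝ) < Real.sqrt 2 := by positivity
  have hz : 0 < z := by positivity
  have hz2 : z ^ 2 = y ^ 2 / 2 := by
    rw [hzdef, div_pow, Real.sq_sqrt (by norm_num : (0:ℝ) ≤ 2)]
  have hyz : y = Real.sqrt 2 * z := by rw [hzdef]; field_simp
  have key : ∀ k : ℕ, y ^ (n+1) * Real.exp (-π * ((k:ℝ) + 1) ^ 2 * y ^ 2)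
      ≤ ((n.factorial : ℝ) * Real.sqrt 2) * (z * Real.exp (-π * ((k:ℝ) + 1) ^ 2 * z ^ 2)) := by
    intro k
    have hk1 : (1:ℝ) ≤ ((k:ℝ)+1)^2 := by nlinarith [Nat.cast_nonneg (α := ℝ) k]
    have hsplit : Real.exp (-π * ((k:ℝ) + 1) ^ 2 * y ^ 2)
        = Real.exp (-(π/2) * ((k:ℝ)+1)^2 * y ^ 2) * Real.exp (-π * ((k:ℝ) + 1) ^ 2 * z ^ 2) := by
      rw [← Real.exp_add, hz2]; ring_nf
    have hA : Real.exp (-(π/2) * ((k:ℝ)+1)^2 * y ^ 2) ≤ Real.exp (-(π/2) * y ^ 2) := by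
      apply Real.exp_le_exp.2
      nlinarith [mul_le_mul_of_nonneg_left hk1 (by positivity : (0:ℝ) ≤ π/2 * y^2)]
    calc y ^ (n+1) * Real.exp (-π * ((k:ℝ) + 1) ^ 2 * y ^ 2)
        = (y ^ n * Real.exp (-(π/2) * ((k:ℝ)+1)^2 * y ^ 2))
            * (y * Real.exp (-π * ((k:ℝ) + 1) ^ 2 * z ^ 2)) := by
          rw [hsplit, pow_succ]; ring
      _ ≤ ((n.factorial:ℝ)) * (y * Real.exp (-π * ((k:ℝ) + 1) ^ 2 * z ^ 2)) := by
          apply mul_le_mul_of_nonneg_right _ (by positivity)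
          exact le_trans (mul_le_mul_of_nonneg_left hA (by positivity)) (poly_exp_le n hy.le)
      _ = ((n.factorial : ℝ) * Real.sqrt 2) * (z * Real.exp (-π * ((k:ℝ) + 1) ^ 2 * z ^ 2)) := by
          rw [hyz]; ring
  have hs1 : Summable (fun k : ℕ => y ^ (n+1) * Real.exp (-π * ((k:ℝ) + 1) ^ 2 * y ^ 2)) :=
    (summable_aux hy).mul_left _
  have hs2 : Summable (fun k : ℕ =>
      ((n.factorial : ℝ) * Real.sqrt 2) * (z * Real.exp (-π * ((k:ℝ) + 1) ^ 2 * z ^ 2))) := by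
    have := (summable_aux hz).mul_left ((n.factorial : ℝ) * Real.sqrt 2 * z)
    simpa [mul_assoc] using this
  have hts := Summable.tsum_le_tsum key hs1 hs2
  rw [tsum_mul_left, tsum_mul_left, tsum_mul_left] at hts
  have hzz := Rf_mul_self_le hz
  have hTz : 0 ≤ ∑' k : ℕ, Real.exp (-π * ((k:ℝ) + 1) ^ 2 * z ^ 2) :=
    tsum_nonneg fun k => (Real.exp_pos _).le
  have hfn : (0:ℝ) ≤ (n.factorial : ℝ) := Nat.cast_nonneg _
  unfold Rf at hzz ⊢
  push_cast at hts hzz ⊢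
  have h5 := mul_le_mul_of_nonneg_left hzz (mul_nonneg hfn h2.le)
  nlinarith [hts, h5]

lemma Rf_le_Cn {n : ℕ} (hn : 1 ≤ n) {y : ℝ} (hy : 0 < y) : y ^ n * Rf y ≤ Cn n := by
  obtain ⟨j, rfl⟩ : ∃ j, n = j + 1 := ⟨n - 1, by omega⟩
  apply le_csSup
  · refine ⟨Real.sqrt 2 * (j.factorial : ℝ), ?_⟩
    rintro t ⟨u, hu, rfl⟩
    exact Rf_pow_le j hu
  · exact ⟨y, hy, rfl⟩

lemma Cn_nonneg {n : ℕ} (hn : 1 ≤ n) : 0 ≤ Cn n := by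
  have h := Rf_le_Cn hn (y := 1) one_pos
  simp only [one_pow, one_mul] at h
  exact le_trans (Rf_nonneg 1) h

lemma Rf_exp_le {n : ℕ} (hn : 1 ≤ n) (t : ℝ) :
    Rf (Real.exp t) ≤ Cn n * Real.exp (-(n:ℝ) * t) := by
  have h := Rf_le_Cn hn (Real.exp_pos t)
  have he : (Real.exp t) ^ n = Real.exp ((n:ℝ) * t) := by
    rw [← Real.exp_nat_mul]
  calc Rf (Real.exp t)
      = Real.exp (-(n:ℝ) * t) * ((Real.exp t) ^ n * Rf (Real.exp t)) := by
        rw [he, ← mul_assoc, ← Real.exp_add]; ring_nf; rw [Real.exp_zero, one_mul]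
    _ ≤ Real.exp (-(n:ℝ) * t) * Cn n := mul_le_mul_of_nonneg_left h (Real.exp_pos _).le
    _ = Cn n * Real.exp (-(n:ℝ) * t) := mul_comm _ _

lemma measurable_Rf_exp : Measurable fun t : ℝ => Rf (Real.exp t) := by
  have hS : Measurable fun t : ℝ =>
      ∑' k : ℕ, Real.exp (-π * ((k:ℝ) + 1) ^ 2 * (Real.exp t) ^ 2) := by
    apply measurable_of_tendsto_metrizable
      (f := fun N t => ∑ k ∈ Finset.range N, Real.exp (-π * ((k:ℝ) + 1) ^ 2 * (Real.exp t) ^ 2))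
    · intro N
      apply Finset.measurable_sum
      intro k _
      fun_prop
    · rw [tendsto_pi_nhds]
      intro t
      exact (summable_aux (Real.exp_pos t)).hasSum.tendsto_sum_nat
  exact hS.const_mul 2

theorem W_decay_bound (σ : ℝ) (x : ℝ) (hx : 0 ≤ x) :
    Wf σ x ≤ (Cn 1 + Cn (4 * ⌈|σ|⌉₊ + 3)) * Cn (2 * ⌈|σ|⌉₊ + 3) *
      Real.exp (-2 * (⌈|σ|⌉₊ + 1) * x) := by
  set m : ℕ := ⌈|σ|⌉₊ with hmdef
  have hσ : |σ| ≤ (m:ℝ) := Nat.le_ceil _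
  obtain ⟨hσ1, hσ2⟩ := abs_le.1 hσ
  set c : ℝ := 2*(m:ℝ) + 2 + 2*σ with hcdef
  have hc1 : 2 ≤ c := by rw [hcdef]; linarith
  have hc2 : c ≤ 4*(m:ℝ)+2 := by rw [hcdef]; linarith
  set n3 : ℕ := 2*m+3 with hn3def
  set n4 : ℕ := 4*m+3 with hn4def
  have hn3 : (1:ℕ) ≤ n3 := by omega
  have hn4 : (1:ℕ) ≤ n4 := by omega
  set F : ℝ → ℝ := fun y => Rf (Real.exp y) * Real.exp (c*y) with hFdef
  have hFmeas : Measurable F := by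
    apply measurable_Rf_exp.mul
    fun_prop
  have hFnn : ∀ y, 0 ≤ F y := fun y => mul_nonneg (Rf_nonneg _) (Real.exp_pos _).le
  have hb1 : ∀ y ∈ Iic (0:ℝ), F y ≤ Cn 1 * Real.exp y := by
    intro y hy
    have h := Rf_exp_le (n := 1) le_rfl y
    have h2 : Rf (Real.exp y) * Real.exp (c*y)
        ≤ (Cn 1 * Real.exp (-(1:ℝ) * y)) * Real.exp (c*y) := by
      apply mul_le_mul_of_nonneg_right _ (Real.exp_pos _).le
      exact_mod_cast h
    refine h2.trans ?_
    rw [mul_assoc, ← Real.exp_add]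
    apply mul_le_mul_of_nonneg_left _ (Cn_nonneg le_rfl)
    apply Real.exp_le_exp.2
    have hy0 : y ≤ 0 := hy
    nlinarith
  have hb2 : ∀ y ∈ Ioi (0:ℝ), F y ≤ Cn n4 * Real.exp (-y) := by
    intro y hy
    have h := Rf_exp_le hn4 y
    have h2 : Rf (Real.exp y) * Real.exp (c*y)
        ≤ (Cn n4 * Real.exp (-(n4:ℝ) * y)) * Real.exp (c*y) := by
      apply mul_le_mul_of_nonneg_right _ (Real.exp_pos _).le
      exact h
    refine h2.trans ?_
    rw [mul_assoc, ← Real.exp_add]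
    apply mul_le_mul_of_nonneg_left _ (Cn_nonneg hn4)
    apply Real.exp_le_exp.2
    have hy0 : 0 ≤ y := le_of_lt hy
    have hn4c : (n4:ℝ) = 4*(m:ℝ)+3 := by rw [hn4def]; push_cast; ring
    nlinarith [hn4c]
  have hexpneg : IntegrableOn (fun y : ℝ => Real.exp (-y)) (Ioi (0:ℝ)) := by
    simpa using exp_neg_integrableOn_Ioi (0:ℝ) one_pos
  have hint1 : IntegrableOn F (Iic 0) := by
    apply Integrable.mono' ((integrableOn_exp_Iic 0).const_mul (Cn 1))
      hFmeas.aestronglyMeasurable.restrict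
    rw [ae_restrict_iff' measurableSet_Iic]
    filter_upwards with y hy
    rw [Real.norm_eq_abs, abs_of_nonneg (hFnn y)]
    exact hb1 y hy
  have hint2 : IntegrableOn F (Ioi 0) := by
    apply Integrable.mono' (hexpneg.const_mul (Cn n4))
      hFmeas.aestronglyMeasurable.restrict
    rw [ae_restrict_iff' measurableSet_Ioi]
    filter_upwards with y hy
    rw [Real.norm_eq_abs, abs_of_nonneg (hFnn y)]
    exact hb2 y hy
  have hFint : Integrable F := by
    rw [← integrableOn_univ, ← Set.Iic_union_Ioi (a := (0:ℝ))]
    exact hint1.union hint2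
  have hptw : ∀ y : ℝ, Rf (Real.exp y) * Rf (Real.exp (x - y)) * Real.exp (x + (2*σ-1)*y)
      ≤ (Cn n3 * Real.exp (-(2*(m:ℝ)+2) * x)) * F y := by
    intro y
    have h := Rf_exp_le hn3 (x - y)
    have e1 : Real.exp (-(n3:ℝ)*(x-y)) * Real.exp (x + (2*σ-1)*y)
        = Real.exp (-(2*(m:ℝ)+2) * x) * Real.exp (c*y) := by
      rw [← Real.exp_add, ← Real.exp_add]
      congr 1
      have hn3c : (n3:ℝ) = 2*(m:ℝ)+3 := by rw [hn3def]; push_cast; ring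
      rw [hn3c, hcdef]; ring
    have step : Rf (Real.exp y) * Rf (Real.exp (x - y)) * Real.exp (x + (2*σ-1)*y)
        ≤ Rf (Real.exp y) * (Cn n3 * Real.exp (-(n3:ℝ)*(x-y))) * Real.exp (x + (2*σ-1)*y) :=
      mul_le_mul_of_nonneg_right (mul_le_mul_of_nonneg_left h (Rf_nonneg _)) (Real.exp_pos _).le
    refine step.trans_eq ?_
    rw [hFdef]
    linear_combination (Rf (Real.exp y) * Cn n3) * e1
  have hW : Wf σ x ≤ ∫ y : ℝ, (Cn n3 * Real.exp (-(2*(m:ℝ)+2) * x)) * F y := by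
    unfold Wf
    apply integral_mono_of_nonneg
    · filter_upwards with y
      exact mul_nonneg (mul_nonneg (Rf_nonneg _) (Rf_nonneg _)) (Real.exp_pos _).le
    · exact hFint.const_mul _
    · filter_upwards with y using hptw y
  rw [MeasureTheory.integral_const_mul] at hW
  have hsplit : ∫ y : ℝ, F y = (∫ y in Iic (0:ℝ), F y) + ∫ y in Ioi (0:ℝ), F y := by
    rw [← MeasureTheory.setIntegral_univ, ← Set.Iic_union_Ioi (a := (0:ℝ)),
      MeasureTheory.setIntegral_union (Set.Iic_disjoint_Ioi le_rfl) measurableSet_Ioi hint1 hint2]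
  have hI1 : (∫ y in Iic (0:ℝ), F y) ≤ Cn 1 := by
    calc (∫ y in Iic (0:ℝ), F y) ≤ ∫ y in Iic (0:ℝ), Cn 1 * Real.exp y :=
          setIntegral_mono_on hint1 ((integrableOn_exp_Iic 0).const_mul (Cn 1))
            measurableSet_Iic hb1
      _ = Cn 1 * ∫ y in Iic (0:ℝ), Real.exp y := MeasureTheory.integral_const_mul _ _
      _ = Cn 1 := by rw [integral_exp_Iic_zero, mul_one]
  have hI2 : (∫ y in Ioi (0:ℝ), F y) ≤ Cn n4 := by
    calc (∫ y in Ioi (0:ℝ), F y) ≤ ∫ y in Ioi (0:ℝ), Cn n4 * Real.exp (-y) :=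
          setIntegral_mono_on hint2 (hexpneg.const_mul (Cn n4))
            measurableSet_Ioi hb2
      _ = Cn n4 * ∫ y in Ioi (0:ℝ), Real.exp (-y) := MeasureTheory.integral_const_mul _ _
      _ = Cn n4 := by rw [integral_exp_neg_Ioi_zero, mul_one]
  have hCF : ∫ y : ℝ, F y ≤ Cn 1 + Cn n4 := by rw [hsplit]; linarith
  have hpos : 0 ≤ Cn n3 * Real.exp (-(2*(m:ℝ)+2) * x) :=
    mul_nonneg (Cn_nonneg hn3) (Real.exp_pos _).le
  calc Wf σ x ≤ Cn n3 * Real.exp (-(2*(m:ℝ)+2)*x) * ∫ y : ℝ, F y := hW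
    _ ≤ Cn n3 * Real.exp (-(2*(m:ℝ)+2)*x) * (Cn 1 + Cn n4) :=
        mul_le_mul_of_nonneg_left hCF hpos
    _ = (Cn 1 + Cn n4) * Cn n3 * Real.exp (-2*((m:ℝ)+1)*x) := by
        have he : -(2*(m:ℝ)+2)*x = -2*((m:ℝ)+1)*x := by ring
        rw [he]; ring
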